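/- Let F1, …, Fn be GENEOs from (Φ, G) to (Ψ, H) associated with T, and let a1, …, an be real numbers with Σ|a_i| ≤ 1. If the operator F_Σ(φ) := Σ a_i F_i(φ) maps Φ into Ψ, then F_Σ is a GENEO from (Φ, G) to (Ψ, H) associated with T. In particular, if Ψ is convex then the set of GENEOs from (Φ, G) to (Ψ, H) associated with T is convex. -/

import Mathlib

/-- `F` is a group equivariant non-expansive operator from `(Φ,G)` to `(Ψ,H)`
associated with the homomorphism `T : G → H`. -/
def IsGENEO {X Y : Type*} (Φ : Set (X → ℝ)) (Ψ : Set (Y → ℝ))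
    (G : Subgroup (Equiv.Perm X)) (H : Subgroup (Equiv.Perm Y)) (T : G →* H)
    (F : (X → ℝ) → (Y → ℝ)) : Prop :=
  (∀ φ ∈ Φ, F φ ∈ Ψ) ∧
  (∀ φ ∈ Φ, ∀ g : G, F (fun x => φ (g.1 x)) = fun y => F φ ((T g).1 y)) ∧
  (∀ φ1 ∈ Φ, ∀ φ2 ∈ Φ, (⨆ y, |F φ1 y - F φ2 y|) ≤ ⨆ x, |φ1 x - φ2 x|)

lemma geneo_sum_aux {X Y : Type*} [Nonempty X] [Nonempty Y]
    (Φ : Set (X → ℝ)) (Ψ : Set (Y → ℝ))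
    (hΨb : ∀ ψ ∈ Ψ, ∃ C : ℝ, ∀ y, |ψ y| ≤ C)
    (G : Subgroup (Equiv.Perm X)) (H : Subgroup (Equiv.Perm Y))
    (T : G →* H)
    (n : ℕ) (Fs : Fin n → ((X → ℝ) → (Y → ℝ)))
    (hFs : ∀ i, IsGENEO Φ Ψ G H T (Fs i))
    (a : Fin n → ℝ) (ha : ∑ i, |a i| ≤ 1)
    (Fsum : (X → ℝ) → (Y → ℝ))
    (hFsum : ∀ f, Fsum f = fun y => ∑ i, a i * Fs i f y)
    (hmaps : ∀ φ ∈ Φ, Fsum φ ∈ Ψ) :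
    IsGENEO Φ Ψ G H T Fsum := by
  refine ⟨hmaps, ?_, ?_⟩
  · intro φ hφ g
    rw [hFsum, hFsum]
    funext y
    congr 1
    funext i
    rw [(hFs i).2.1 φ hφ g]
  · intro φ1 hφ1 φ2 hφ2
    set S := ⨆ x, |φ1 x - φ2 x| with hS
    have hS0 : 0 ≤ S := Real.iSup_nonneg fun x => abs_nonneg _
    apply ciSup_le
    intro y
    rw [hFsum, hFsum]
    have key : ∀ i : Fin n, |Fs i φ1 y - Fs i φ2 y| ≤ S := by
      intro i
      have h1 := (hFs i).2.2 φ1 hφ1 φ2 hφ2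
      refine le_trans ?_ h1
      have hbdd : BddAbove (Set.range fun y => |Fs i φ1 y - Fs i φ2 y|) := by
        obtain ⟨C1, hC1⟩ := hΨb _ ((hFs i).1 φ1 hφ1)
        obtain ⟨C2, hC2⟩ := hΨb _ ((hFs i).1 φ2 hφ2)
        refine ⟨C1 + C2, ?_⟩
        rintro _ ⟨y', rfl⟩
        exact (abs_sub _ _).trans (add_le_add (hC1 y') (hC2 y'))
      exact le_ciSup hbdd y
    calc |∑ i, a i * Fs i φ1 y - ∑ i, a i * Fs i φ2 y|
        = |∑ i, a i * (Fs i φ1 y - Fs i φ2 y)| := by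
          congr 1; rw [← Finset.sum_sub_distrib]; congr 1; funext i; ring
      _ ≤ ∑ i, |a i * (Fs i φ1 y - Fs i φ2 y)| := Finset.abs_sum_le_sum_abs _ _
      _ ≤ ∑ i, |a i| * S := by
          refine Finset.sum_le_sum fun i _ => ?_
          rw [abs_mul]
          exact mul_le_mul_of_nonneg_left (key i) (abs_nonneg _)
      _ = (∑ i, |a i|) * S := by rw [Finset.sum_mul]
      _ ≤ 1 * S := mul_le_mul_of_nonneg_right ha hS0
      _ = S := one_mul S

/-- if `F1, …, Fn` are GENEOs, `Σ|a_i| ≤ 1`, and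
`F_Σ(φ) = Σ a_i F_i(φ)` maps `Φ` into `Ψ`, then `F_Σ` is a GENEO; in particular, if `Ψ`
is convex, the set of GENEOs is convex. -/
theorem stmt16 {X Y : Type*} [Nonempty X] [Nonempty Y]
    (Φ : Set (X → ℝ)) (Ψ : Set (Y → ℝ))
    (hΦb : ∀ φ ∈ Φ, ∃ C : ℝ, ∀ x, |φ x| ≤ C)
    (hΨb : ∀ ψ ∈ Ψ, ∃ C : ℝ, ∀ y, |ψ y| ≤ C)
    (G : Subgroup (Equiv.Perm X)) (H : Subgroup (Equiv.Perm Y))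
    (hG : ∀ g ∈ G, ∀ φ ∈ Φ, (fun x => φ (g x)) ∈ Φ)
    (hH : ∀ h ∈ H, ∀ ψ ∈ Ψ, (fun y => ψ (h y)) ∈ Ψ)
    (T : G →* H)
    (n : ℕ) (Fs : Fin n → ((X → ℝ) → (Y → ℝ)))
    (hFs : ∀ i, IsGENEO Φ Ψ G H T (Fs i))
    (a : Fin n → ℝ) (ha : ∑ i, |a i| ≤ 1)
    (Fsum : (X → ℝ) → (Y → ℝ))
    (hFsum : ∀ f, Fsum f = fun y => ∑ i, a i * Fs i f y)
    (hmaps : ∀ φ ∈ Φ, Fsum φ ∈ Ψ) :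
    IsGENEO Φ Ψ G H T Fsum ∧
    (Convex ℝ Ψ → ∀ F1 F2, IsGENEO Φ Ψ G H T F1 → IsGENEO Φ Ψ G H T F2 →
      ∀ t : ℝ, 0 ≤ t → t ≤ 1 →
        IsGENEO Φ Ψ G H T (fun f => fun y => t * F1 f y + (1 - t) * F2 f y)) := by

  have main := geneo_sum_aux Φ Ψ hΨb G H T n Fs hFs a ha Fsum hFsum hmaps
  refine ⟨main, ?_⟩
  intro hC F1 F2 hF1 hF2 t ht0 ht1
  have ha2 : ∑ i, |(![t, 1 - t]) i| ≤ 1 := by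
    rw [Fin.sum_univ_two]
    simp only [Matrix.cons_val_zero, Matrix.cons_val_one, Matrix.head_cons]
    rw [abs_of_nonneg ht0, abs_of_nonneg (by linarith)]
    linarith
  refine geneo_sum_aux Φ Ψ hΨb G H T 2 ![F1, F2]
    (fun i => by fin_cases i <;> simpa) ![t, 1 - t] ha2 _
    (fun f => ?_) ?_
  · funext y
    rw [Fin.sum_univ_two]
    simp
  · intro φ hφ
    have := hC (hF1.1 φ hφ) (hF2.1 φ hφ) ht0 (by linarith : (0:ℝ) ≤ 1 - t) (by ring)
    convert this using 1
    funext y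
    simp [Pi.add_apply, Pi.smul_apply, smul_eq_mul]
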